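/- Fix p > 1 and let f : ℝ → ℝ be given by a power series f(a) = Σ_{n=0}^∞ γ_n a^n, with f₊(a) := Σ_{n=0}^∞ |γ_n| a^n. On a probability space, let N be a random variable taking values in the nonnegative integers with P(N = n) = (p−1)/p^{n+1} for every n ∈ ℕ, let (X_j)_{j≥1} be i.i.d. square-integrable real random variables independent of N, and suppose f₊(√(p·E[X_1²])) < ∞. Define θ := γ_N · (p^{N+1}/(p−1)) · ∏_{j=1}^N X_j (so θ = γ_0·p/(p−1) when N = 0). Then E[θ²] ≤ (p/(p−1)) · f₊(√(p·E[X_1²]))². -/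

import Mathlib

open MeasureTheory ProbabilityTheory
open scoped ENNReal

/-- **Lemma 1 (second-moment bound).** Fix `p > 1` and a power series with
coefficients `γ`, and set `f₊(a) = Σ |γ_n| aⁿ`. Let `N` be geometric with parameter
`p` (i.e. `P(N = n) = (p-1)/p^(n+1)`), and let `(X_j)` be i.i.d. square-integrable
real random variables independent of `N` with `f₊(√(p·E[X₁²])) < ∞`. Then the
estimator `θ = γ_N · (p^(N+1)/(p-1)) · ∏_{j=1}^N X_j` satisfies
`E[θ²] ≤ (p/(p-1)) · f₊(√(p·E[X₁²]))²`. -/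
theorem estimator_second_moment_bound
    {Ω : Type*} [MeasurableSpace Ω] (μ : Measure Ω) [IsProbabilityMeasure μ]
    (p : ℝ) (hp : 1 < p)
    (γ : ℕ → ℝ)
    (N : Ω → ℕ) (hN : Measurable N)
    (hNdist : ∀ n : ℕ, μ {ω | N ω = n} = ENNReal.ofReal ((p - 1) / p ^ (n + 1)))
    (X : ℕ → Ω → ℝ) (hXm : ∀ j, Measurable (X j))
    (hXindep : iIndepFun X μ)
    (hXid : ∀ j, μ.map (X j) = μ.map (X 0))
    (hNX : IndepFun N (fun ω => fun j => X j ω) μ)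
    (hXsq : Integrable (fun ω => (X 0 ω) ^ 2) μ)
    (hfplus : Summable (fun n : ℕ =>
      |γ n| * Real.sqrt (p * ∫ ω, (X 0 ω) ^ 2 ∂μ) ^ n)) :
    ∫⁻ ω, ENNReal.ofReal
        ((γ (N ω) * (p ^ (N ω + 1) / (p - 1)) * ∏ j ∈ Finset.range (N ω), X j ω) ^ 2) ∂μ
      ≤ ENNReal.ofReal ((p / (p - 1)) *
          (∑' n : ℕ, |γ n| * Real.sqrt (p * ∫ ω, (X 0 ω) ^ 2 ∂μ) ^ n) ^ 2) := by
  set M : ℝ := ∫ ω, (X 0 ω) ^ 2 ∂μ with hMdef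
  have hM0 : 0 ≤ M := integral_nonneg fun ω => sq_nonneg _
  have hpM0 : 0 ≤ p * M := mul_nonneg (by linarith) hM0
  -- the ENNReal-valued squares
  set Y : ℕ → Ω → ℝ≥0∞ := fun j ω => ENNReal.ofReal ((X j ω) ^ 2) with hYdef
  have hYm : ∀ j, Measurable (Y j) := fun j => ((hXm j).pow_const 2).ennreal_ofReal
  set L : ℝ≥0∞ := ∫⁻ ω, Y 0 ω ∂μ with hLdef
  have hL : L = ENNReal.ofReal M := by
    rw [hLdef, hMdef, ofReal_integral_eq_lintegral_ofReal hXsq (ae_of_all _ fun ω => sq_nonneg _)]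
  have hYid : ∀ j, ∫⁻ ω, Y j ω ∂μ = L := by
    intro j
    have h1 : ∫⁻ ω, Y j ω ∂μ = ∫⁻ x, ENNReal.ofReal (x ^ 2) ∂(μ.map (X j)) :=
      (lintegral_map ((measurable_id.pow_const 2).ennreal_ofReal) (hXm j)).symm
    have h2 : L = ∫⁻ x, ENNReal.ofReal (x ^ 2) ∂(μ.map (X 0)) :=
      (lintegral_map ((measurable_id.pow_const 2).ennreal_ofReal) (hXm 0)).symm
    rw [h1, hXid j, ← h2]
  have hYindep : iIndepFun Y μ := by
    have := hXindep.comp (fun _ (x : ℝ) => ENNReal.ofReal (x ^ 2))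
      (fun _ => (measurable_id.pow_const 2).ennreal_ofReal)
    exact this
  -- product of Y over range n has lintegral L ^ n
  have hprod : ∀ n : ℕ, ∫⁻ ω, ∏ j ∈ Finset.range n, Y j ω ∂μ = L ^ n := by
    intro n
    induction n with
    | zero => simp
    | succ n ih =>
      have hind := hYindep.indepFun_prod_range_succ hYm n
      have heqf : (∏ j ∈ Finset.range n, Y j) = fun a => ∏ j ∈ Finset.range n, Y j a :=
        funext fun a => Finset.prod_apply a (Finset.range n) Y
      rw [heqf] at hind
      have hmul := lintegral_mul_eq_lintegral_mul_lintegral_of_indepFun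
        (Finset.measurable_prod (f := Y) (Finset.range n) fun j _ => hYm j) (hYm n) hind
      simp only [Pi.mul_apply, Finset.prod_apply] at hmul
      rw [pow_succ, ← ih, ← hYid n]
      simpa [Finset.prod_range_succ] using hmul
  -- measurable sets {N = n}
  have hSm : ∀ n : ℕ, MeasurableSet {ω | N ω = n} := fun n =>
    hN (measurableSet_singleton n)
  -- decompose pointwise as a tsum over the partition {N = n}
  have hpt : ∀ ω, ENNReal.ofReal
      ((γ (N ω) * (p ^ (N ω + 1) / (p - 1)) * ∏ j ∈ Finset.range (N ω), X j ω) ^ 2)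
      = ∑' n : ℕ, Set.indicator {ω' | N ω' = n}
          (fun ω' => ENNReal.ofReal ((γ n * (p ^ (n + 1) / (p - 1))) ^ 2) *
            ∏ j ∈ Finset.range n, Y j ω') ω := by
    intro ω
    rw [tsum_eq_single (N ω) (by
      intro n hn
      simp [Set.indicator_of_notMem, hn.symm])]
    rw [Set.indicator_of_mem (show ω ∈ {ω' | N ω' = N ω} from rfl)]
    rw [mul_pow, ENNReal.ofReal_mul (sq_nonneg _)]
    congr 1
    rw [← Finset.prod_pow, ENNReal.ofReal_prod_of_nonneg fun i _ => sq_nonneg _]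
  -- independence: lintegral over {N = n} of the product
  have hkey : ∀ n : ℕ, ∫⁻ ω in {ω' | N ω' = n}, ∏ j ∈ Finset.range n, Y j ω ∂μ
      = μ {ω' | N ω' = n} * L ^ n := by
    intro n
    have hind : IndepFun (fun ω => Set.indicator {m : ℕ | m = n} (fun _ => (1 : ℝ≥0∞)) (N ω))
        (fun ω => ∏ j ∈ Finset.range n, ENNReal.ofReal ((X j ω) ^ 2)) μ := by
      have := hNX.comp
        (φ := fun m : ℕ => Set.indicator {m' : ℕ | m' = n} (fun _ => (1 : ℝ≥0∞)) m)
        (ψ := fun v : ℕ → ℝ => ∏ j ∈ Finset.range n, ENNReal.ofReal ((v j) ^ 2))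
        measurable_from_top
        (Finset.measurable_prod _ fun j _ =>
          ((measurable_pi_apply j).pow_const 2).ennreal_ofReal)
      exact this
    have hmul := lintegral_mul_eq_lintegral_mul_lintegral_of_indepFun
      (f := fun ω => Set.indicator {m : ℕ | m = n} (fun _ => (1 : ℝ≥0∞)) (N ω))
      (g := fun ω => ∏ j ∈ Finset.range n, ENNReal.ofReal ((X j ω) ^ 2))
      ((measurable_from_top (f := Set.indicator {m : ℕ | m = n} (fun _ => (1 : ℝ≥0∞)))).comp hN)
      (Finset.measurable_prod _ fun j _ => hYm j) hind
    have heq : (fun ω => Set.indicator {m : ℕ | m = n} (fun _ => (1 : ℝ≥0∞)) (N ω)) =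
        Set.indicator {ω' | N ω' = n} (fun _ => (1 : ℝ≥0∞)) := by
      funext ω
      by_cases h : N ω = n <;> simp [Set.indicator, h]
    have hindic : ∫⁻ ω, Set.indicator {m : ℕ | m = n} (fun _ => (1 : ℝ≥0∞)) (N ω) ∂μ
        = μ {ω' | N ω' = n} := by
      rw [heq, lintegral_indicator (hSm n), setLIntegral_one]
    rw [← setLIntegral_one] at hindic
    have : ∫⁻ ω in {ω' | N ω' = n}, ∏ j ∈ Finset.range n, Y j ω ∂μ
        = ∫⁻ ω, Set.indicator {ω' | N ω' = n}
            (fun ω' => ∏ j ∈ Finset.range n, Y j ω') ω ∂μ := by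
      rw [lintegral_indicator (hSm n)]
    rw [this]
    have hptwise : (Set.indicator {ω' | N ω' = n}
        (fun ω' => ∏ j ∈ Finset.range n, Y j ω')) =
        fun ω => (Set.indicator {m : ℕ | m = n} (fun _ => (1 : ℝ≥0∞)) (N ω)) *
          ∏ j ∈ Finset.range n, Y j ω := by
      funext ω
      by_cases h : N ω = n <;> simp [Set.indicator, h]
    rw [hptwise]
    simp only [Pi.mul_apply] at hmul
    rw [hmul, heq, lintegral_indicator (hSm n), setLIntegral_one, hprod n]
  -- rewrite LHS
  have hLHS : ∫⁻ ω, ENNReal.ofReal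
      ((γ (N ω) * (p ^ (N ω + 1) / (p - 1)) * ∏ j ∈ Finset.range (N ω), X j ω) ^ 2) ∂μ
      = ∑' n : ℕ, ENNReal.ofReal ((γ n * (p ^ (n + 1) / (p - 1))) ^ 2) *
          (μ {ω' | N ω' = n} * L ^ n) := by
    rw [lintegral_congr hpt, lintegral_tsum (f := fun n => Set.indicator {ω' | N ω' = n}
        (fun ω' => ENNReal.ofReal ((γ n * (p ^ (n + 1) / (p - 1))) ^ 2) *
          ∏ j ∈ Finset.range n, Y j ω')) (fun n =>
      ((measurable_const.mul (Finset.measurable_prod _ fun j _ => hYm j)).indicator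
        (hSm n)).aemeasurable)]
    congr 1
    funext n
    rw [lintegral_indicator (hSm n), lintegral_const_mul _
      (Finset.measurable_prod _ fun j _ => hYm j), hkey n]
  rw [hLHS]
  -- now it's a purely real computation
  set a : ℕ → ℝ := fun n => |γ n| * Real.sqrt (p * M) ^ n with hadef
  have ha0 : ∀ n, 0 ≤ a n := fun n =>
    mul_nonneg (abs_nonneg _) (pow_nonneg (Real.sqrt_nonneg _) _)
  set S : ℝ := ∑' n, a n with hSdef
  have hS0 : 0 ≤ S := tsum_nonneg ha0
  have haS : ∀ n, a n ≤ S := fun n => Summable.le_tsum hfplus n fun k _ => ha0 k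
  have hsummul : Summable (fun n => a n * S) := hfplus.mul_right S
  have hsumsq : Summable (fun n => a n ^ 2) := by
    refine Summable.of_nonneg_of_le (fun n => sq_nonneg _) (fun n => ?_) hsummul
    rw [sq]
    exact mul_le_mul_of_nonneg_left (haS n) (ha0 n)
  have hsq_le : ∑' n, a n ^ 2 ≤ S ^ 2 := by
    calc ∑' n, a n ^ 2 ≤ ∑' n, a n * S := Summable.tsum_le_tsum (fun n => by
          rw [sq]; exact mul_le_mul_of_nonneg_left (haS n) (ha0 n)) hsumsq hsummul
      _ = S * S := by rw [tsum_mul_right]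
      _ = S ^ 2 := (sq S).symm
  have hp0 : (0:ℝ) < p := by linarith
  have hp1 : (0:ℝ) < p - 1 := by linarith
  have hterm : ∀ n : ℕ, ENNReal.ofReal ((γ n * (p ^ (n + 1) / (p - 1))) ^ 2) *
      (μ {ω' | N ω' = n} * L ^ n)
      = ENNReal.ofReal ((p / (p - 1)) * a n ^ 2) := by
    intro n
    rw [hNdist n, hL, ← ENNReal.ofReal_pow hM0, ← ENNReal.ofReal_mul
      (by positivity), ← ENNReal.ofReal_mul (sq_nonneg _)]
    congr 1
    have hsq : a n ^ 2 = γ n ^ 2 * (p * M) ^ n := by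
      rw [hadef]
      simp only
      rw [mul_pow, sq_abs, ← pow_mul, mul_comm n 2, pow_mul, Real.sq_sqrt hpM0]
    rw [hsq]
    have hpn : (0:ℝ) < p ^ (n+1) := pow_pos hp0 _
    field_simp
    ring
  rw [tsum_congr hterm]
  rw [← ENNReal.ofReal_tsum_of_nonneg (fun n => by positivity)
    (hsumsq.mul_left _)]
  apply ENNReal.ofReal_le_ofReal
  rw [tsum_mul_left]
  exact mul_le_mul_of_nonneg_left hsq_le (by positivity)
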